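/- Let g : [2^k] → ℕ be (1/2)-far from monotone, and define F : [ℓ·2^k] → ℕ by F(t·2^k + x) = t·C + g(x) for one block index t ∈ [ℓ] (C ≥ max g + 1), and F(s·2^k + x) = s·C + f_s(x) with arbitrary monotone f_s : [2^k] → [C) on the other blocks. Then F is (1/(2ℓ))-far from monotone. -/

import Mathlib

/-- Let `g : [2^k] → ℕ` be `1/2`-far from monotone and define
`F : [ℓ·2^k] → ℕ` blockwise by `F (s·2^k + x) = s·C + g x` on block `s = t`
and `F (s·2^k + x) = s·C + f_s x` with monotone `f_s : [2^k] → [C)` on the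
other blocks (where `C > max g`).  Then `F` is `1/(2ℓ)`-far from monotone:
every monotone function on `[ℓ·2^k]` differs from `F` on at least
`(ℓ·2^k)/(2ℓ)` points. -/
theorem stmt17 (k ℓ t C : ℕ) (hℓ : 1 ≤ ℓ) (ht : t < ℓ)
    (g : ℕ → ℕ) (hgC : ∀ x < 2 ^ k, g x < C)
    (hgfar : ∀ h : ℕ → ℕ, (∀ x y, x ≤ y → y < 2 ^ k → h x ≤ h y) →
      (2 : ℝ) ^ k / 2 ≤ ((Finset.range (2 ^ k)).filter (fun x => g x ≠ h x)).card)
    (f : ℕ → ℕ → ℕ)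
    (hf : ∀ s < ℓ, (∀ x y, x ≤ y → y < 2 ^ k → f s x ≤ f s y) ∧
      ∀ x < 2 ^ k, f s x < C)
    (F : ℕ → ℕ)
    (hF : ∀ s < ℓ, ∀ x < 2 ^ k,
      F (s * 2 ^ k + x) = s * C + if s = t then g x else f s x) :
    ∀ h : ℕ → ℕ, (∀ x y, x ≤ y → y < ℓ * 2 ^ k → h x ≤ h y) →
      (ℓ * 2 ^ k : ℝ) / (2 * ℓ) ≤
        ((Finset.range (ℓ * 2 ^ k)).filter (fun x => F x ≠ h x)).card := by
  intro h hmono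
  set h' : ℕ → ℕ := fun x => h (t * 2 ^ k + x) - t * C with hh'
  have hlt : ∀ y < 2 ^ k, t * 2 ^ k + y < ℓ * 2 ^ k := by
    intro y hy
    have : t * 2 ^ k + y < (t + 1) * 2 ^ k := by nlinarith
    have h2 : (t + 1) * 2 ^ k ≤ ℓ * 2 ^ k := Nat.mul_le_mul_right _ ht
    omega
  have hmono' : ∀ x y, x ≤ y → y < 2 ^ k → h' x ≤ h' y := by
    intro x y hxy hy
    exact Nat.sub_le_sub_right (hmono _ _ (by omega) (hlt y hy)) _
  have hcard := hgfar h' hmono'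
  have hinj : ((Finset.range (2 ^ k)).filter (fun x => g x ≠ h' x)).card ≤
      ((Finset.range (ℓ * 2 ^ k)).filter (fun x => F x ≠ h x)).card := by
    apply Finset.card_le_card_of_injOn (fun x => t * 2 ^ k + x)
    · intro x hx
      simp only [Finset.coe_filter, Set.mem_setOf_eq, Finset.mem_coe, Finset.mem_filter, Finset.mem_range] at hx ⊢
      obtain ⟨hx1, hx2⟩ := hx
      refine ⟨hlt x hx1, ?_⟩
      intro heq
      have hFv := hF t ht x hx1
      rw [if_pos rfl] at hFv
      apply hx2
      rw [hh']
      simp only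
      rw [← heq, hFv]
      omega
    · intro a _ b _ hab
      simp only at hab
      omega
  have heq : (ℓ * 2 ^ k : ℝ) / (2 * ℓ) = (2 : ℝ) ^ k / 2 := by
    have hℓ' : (ℓ : ℝ) ≠ 0 := by positivity
    field_simp
  rw [heq]
  calc ((2 : ℝ) ^ k / 2) ≤ _ := hcard
    _ ≤ _ := by exact_mod_cast hinj
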